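/- arXiv:2406.19854 — 4 statements merged into one kernel-verified Lean document; each statement's English description precedes it below -/
import Mathlib

section
/- Let X be a symmetric simplicial set. Then X is spiny (i.e., 𝓔_T is injective for every n ≥ 1 and every spine T of [n]) if and only if for each n ≥ 1 there exists at least one spine T of [n] such that 𝓔_T : X_n → lim_T X is injective. -/
/-- A symmetric (simplicial) set: a functor `Υᵒᵖ → Set`, where `Υ` has objects
`[n] = {0,…,n}` (encoded as `Fin (n+1)`) and all functions as morphisms.
For `α : [m] → [n]` and `x ∈ X_n`, `act α x` is `x · α ∈ X_m`. -/
structure SymSet where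
  obj : ℕ → Type
  act : ∀ {m n : ℕ}, (Fin (m + 1) → Fin (n + 1)) → obj n → obj m
  act_id : ∀ {n : ℕ} (x : obj n), act id x = x
  act_comp : ∀ {m n k : ℕ} (α : Fin (m + 1) → Fin (n + 1)) (β : Fin (n + 1) → Fin (k + 1))
      (x : obj k), act α (act β x) = act (β ∘ α) x

namespace SymSet

/-- `x_{ij} ∈ X_1`, the action on `x ∈ X_n` of the map `[1] → [n]` with `0 ↦ i`, `1 ↦ j`. -/
def edge (X : SymSet) {n : ℕ} (i j : Fin (n + 1)) (x : X.obj n) : X.obj 1 :=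
  X.act (fun t : Fin 2 => if t = 0 then i else j) x

/-- The domain of an edge, its image under `ι₀ : [0] → [1]`, `0 ↦ 0`. -/
def edgeDom (X : SymSet) (f : X.obj 1) : X.obj 0 :=
  X.act (fun _ : Fin 1 => (0 : Fin 2)) f

/-- The codomain of an edge, its image under `ι₁ : [0] → [1]`, `0 ↦ 1`. -/
def edgeCod (X : SymSet) (f : X.obj 1) : X.obj 0 :=
  X.act (fun _ : Fin 1 => (1 : Fin 2)) f

/-- The identity edge `id_a` on an object `a ∈ X_0`, induced by the unique map `[1] → [0]`. -/
def identityEdge (X : SymSet) (a : X.obj 0) : X.obj 1 :=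
  X.act (fun _ : Fin 2 => (0 : Fin 1)) a

/-- An edge is an identity if it is in the image of `X_0 → X_1`. -/
def IsIdentityEdge (X : SymSet) (f : X.obj 1) : Prop :=
  ∃ a : X.obj 0, f = X.identityEdge a

/-- The tuple of edges `x_{ij}` (for `i < j` an edge `{i,j}` of the spine `T`)
associated to an `n`-simplex `x`. -/
def spineTuple (X : SymSet) {n : ℕ} (T : SimpleGraph (Fin (n + 1))) (x : X.obj n) :
    ∀ i j : Fin (n + 1), i < j → T.Adj i j → X.obj 1 :=
  fun i j _ _ => X.edge i j x

/-- Membership in `lim_T X`: the components have matching endpoints. -/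
def IsSpineLim (X : SymSet) {n : ℕ} (T : SimpleGraph (Fin (n + 1)))
    (e : ∀ i j : Fin (n + 1), i < j → T.Adj i j → X.obj 1) : Prop :=
  ∃ v : Fin (n + 1) → X.obj 0, ∀ (i j : Fin (n + 1)) (hlt : i < j) (h : T.Adj i j),
    X.edgeDom (e i j hlt h) = v i ∧ X.edgeCod (e i j hlt h) = v j

/-- The limit `lim_T X` of the diagram associated to a spine `T`. -/
def SpineLim (X : SymSet) {n : ℕ} (T : SimpleGraph (Fin (n + 1))) : Type :=
  { e : ∀ i j : Fin (n + 1), i < j → T.Adj i j → X.obj 1 // X.IsSpineLim T e }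

lemma spineTuple_isSpineLim (X : SymSet) {n : ℕ} (T : SimpleGraph (Fin (n + 1)))
    (x : X.obj n) : X.IsSpineLim T (X.spineTuple T x) := by
  refine ⟨fun i => X.act (fun _ : Fin 1 => i) x, fun i j hlt h => ⟨?_, ?_⟩⟩
  · show X.act _ (X.act _ x) = _
    rw [X.act_comp]
    show X.act ((fun t : Fin 2 => if t = 0 then i else j) ∘ fun _ : Fin 1 => 0) x
      = X.act (fun _ : Fin 1 => i) x
    congr 1
  · show X.act _ (X.act _ x) = _
    rw [X.act_comp]
    show X.act ((fun t : Fin 2 => if t = 0 then i else j) ∘ fun _ : Fin 1 => 1) x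
      = X.act (fun _ : Fin 1 => j) x
    congr 1

/-- The map `𝓔_T : X_n → lim_T X`. -/
def spineMap (X : SymSet) {n : ℕ} (T : SimpleGraph (Fin (n + 1))) (x : X.obj n) :
    X.SpineLim T :=
  ⟨X.spineTuple T x, X.spineTuple_isSpineLim T x⟩

/-- A symmetric set is *spiny* if `𝓔_T` is injective for every `n ≥ 1` and
every spine `T` of `[n]` (a tree with vertex set `[n]`). -/
def Spiny (X : SymSet) : Prop :=
  ∀ n : ℕ, 1 ≤ n → ∀ T : SimpleGraph (Fin (n + 1)), T.IsTree →
    Function.Injective (X.spineMap T)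

/-- An element `x ∈ X_n` is degenerate if `x = y · σ` for some noninvertible
surjection `σ : [n] → [k]`. -/
def Degenerate (X : SymSet) {n : ℕ} (x : X.obj n) : Prop :=
  ∃ (k : ℕ) (σ : Fin (n + 1) → Fin (k + 1)) (y : X.obj k),
    Function.Surjective σ ∧ ¬ Function.Bijective σ ∧ x = X.act σ y

/-- A symmetric subset (subfunctor) of `X`. -/
structure SymSubset (X : SymSet) where
  carrier : ∀ n : ℕ, Set (X.obj n)
  act_mem : ∀ {m n : ℕ} (α : Fin (m + 1) → Fin (n + 1)) {x : X.obj n},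
    x ∈ carrier n → X.act α x ∈ carrier m

/-- `X` is `n`-skeletal: the smallest symmetric subset of `X` containing all
of its `n`-simplices is all of `X`. -/
def IsSkeletal (X : SymSet) (n : ℕ) : Prop :=
  ∀ Y : SymSubset X, (∀ x : X.obj n, x ∈ Y.carrier n) →
    ∀ (m : ℕ) (x : X.obj m), x ∈ Y.carrier m

/-- `X` has dimension `n`: it is `n`-skeletal but not `k`-skeletal for `k < n`
(for `n ≥ 1` this is equivalent to not being `(n-1)`-skeletal). -/
def HasDim (X : SymSet) (n : ℕ) : Prop :=
  X.IsSkeletal n ∧ ∀ k : ℕ, k < n → ¬ X.IsSkeletal k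

/-- Two objects are related if there is an edge between them (in either direction). -/
def EdgeRel (X : SymSet) (a b : X.obj 0) : Prop :=
  ∃ f : X.obj 1, (X.edgeDom f = a ∧ X.edgeCod f = b) ∨ (X.edgeDom f = b ∧ X.edgeCod f = a)

/-- `X` is connected: it is nonempty and any two objects are joined by a
zig-zag of edges. -/
def Connected (X : SymSet) : Prop :=
  Nonempty (X.obj 0) ∧ ∀ a b : X.obj 0, Relation.ReflTransGen X.EdgeRel a b

/-- `n_a`: the number of nonidentity edges with domain `a`. -/
noncomputable def nEdges (X : SymSet) (a : X.obj 0) : ℕ :=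
  Nat.card { f : X.obj 1 // X.edgeDom f = a ∧ ¬ X.IsIdentityEdge f }

/-- `p(X)`: the maximum of the `n_a` over all objects `a`. -/
noncomputable def pVal (X : SymSet) : ℕ := ⨆ a : X.obj 0, X.nEdges a

/-- A map of symmetric sets (a natural transformation). -/
structure SymMap (X Y : SymSet) where
  app : ∀ n : ℕ, X.obj n → Y.obj n
  naturality : ∀ {m n : ℕ} (α : Fin (m + 1) → Fin (n + 1)) (x : X.obj n),
    app m (X.act α x) = Y.act α (app n x)

/-- A map of symmetric sets is an isomorphism iff it is levelwise bijective. -/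
def SymMap.IsIso {X Y : SymSet} (F : SymMap X Y) : Prop :=
  ∀ n : ℕ, Function.Bijective (F.app n)

/-- `X` and `Y` are isomorphic symmetric sets. -/
def Isomorphic (X Y : SymSet) : Prop := ∃ F : SymMap X Y, F.IsIso

/-- The Bousfield–Segal map `𝓑_m : X_m → X_1^m`, `x ↦ (x_{01}, x_{02}, …, x_{0m})`. -/
def bousfield (X : SymSet) {m : ℕ} (x : X.obj m) : Fin m → X.obj 1 :=
  fun i => X.edge 0 i.succ x

/-- `X` is spiny in degrees below `q`: `𝓔_T` is injective for every spine `T`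
of `[n]` for each `1 ≤ n ≤ q`. -/
def SpinyBelow (X : SymSet) (q : ℕ) : Prop :=
  ∀ n : ℕ, 1 ≤ n → n ≤ q → ∀ T : SimpleGraph (Fin (n + 1)), T.IsTree →
    Function.Injective (X.spineMap T)

/-- `X` is a groupoid: `𝓔_T : X_n → lim_T X` is a bijection for every `n ≥ 1`
and every spine `T` of `[n]`. -/
def IsGroupoid (X : SymSet) : Prop :=
  ∀ n : ℕ, 1 ≤ n → ∀ T : SimpleGraph (Fin (n + 1)), T.IsTree →
    Function.Bijective (X.spineMap T)

/-- `X` is reduced: `X_0` is a singleton. -/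
def Reduced (X : SymSet) : Prop := Nonempty (X.obj 0) ∧ Subsingleton (X.obj 0)

/-- A partial group is a reduced spiny symmetric set. -/
def IsPartialGroup (X : SymSet) : Prop := X.Reduced ∧ X.Spiny

/-- The levelwise product of two symmetric sets. -/
def prod (X Y : SymSet) : SymSet where
  obj n := X.obj n × Y.obj n
  act α p := (X.act α p.1, Y.act α p.2)
  act_id p := by cases p with | mk a b => simp only [X.act_id, Y.act_id]
  act_comp α β p := by cases p with | mk a b => simp only [X.act_comp, Y.act_comp]

end SymSet

section Aux
open SimpleGraph

lemma no_reach {V : Type*} (G : SimpleGraph V) (S : Set V)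
    (h : ∀ a b, G.Adj a b → (a ∈ S ↔ b ∈ S)) {v w : V} (hv : v ∈ S) (hw : w ∉ S) :
    ¬ G.Reachable v w := by
  rintro ⟨p⟩
  induction p with
  | nil => exact hw hv
  | cons ha q ih => exact ih ((h _ _ ha).mp hv) hw

lemma bridge_aux (n : ℕ) {v w : Fin (n + 1)} (hvw : (pathGraph (n + 1)).Adj v w)
    (hlt : (v : ℕ) + 1 = (w : ℕ)) : (pathGraph (n + 1)).IsBridge s(v, w) := by
  rw [isBridge_iff]
  refine ?_
  apply no_reach _ {x : Fin (n+1) | (x : ℕ) ≤ (v : ℕ)} _ (by simp)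
    (by simp only [Set.mem_setOf_eq]; omega)
  intro a b hab
  simp only [deleteEdges_adj, Set.mem_singleton_iff, Sym2.eq_iff] at hab
  obtain ⟨hab1, hab2⟩ := hab
  rw [pathGraph_adj] at hab1
  have hne : ¬((a = v ∧ b = w) ∨ (a = w ∧ b = v)) := by
    intro h; exact hab2 h
  simp only [Fin.ext_iff] at hne
  simp only [Set.mem_setOf_eq]
  omega

lemma pathGraph_isTree (n : ℕ) : (pathGraph (n + 1)).IsTree := by
  constructor
  · exact pathGraph_connected n
  · rw [isAcyclic_iff_forall_adj_isBridge]
    intro v w hvw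
    rcases pathGraph_adj.mp hvw with h | h
    · exact bridge_aux n hvw h
    · rw [Sym2.eq_swap]; exact bridge_aux n hvw.symm h

/-- The path spine `0 - 1 - 2` on `Fin 3`. -/
def P1 : SimpleGraph (Fin 3) where
  Adj i j := (i = 0 ∧ j = 1) ∨ (i = 1 ∧ j = 0) ∨ (i = 1 ∧ j = 2) ∨ (i = 2 ∧ j = 1)
  symm := ⟨by intro i j h; tauto⟩
  loopless := by
    refine ⟨?_⟩
    intro i h
    rcases h with ⟨h1, h2⟩ | ⟨h1, h2⟩ | ⟨h1, h2⟩ | ⟨h1, h2⟩ <;> subst h1 <;>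
      exact absurd h2 (by decide)

instance : DecidableRel P1.Adj := fun i j =>
  inferInstanceAs (Decidable ((i = 0 ∧ j = 1) ∨ (i = 1 ∧ j = 0) ∨ (i = 1 ∧ j = 2) ∨ (i = 2 ∧ j = 1)))

lemma edge_act (X : SymSet) {m n : ℕ} (α : Fin (m + 1) → Fin (n + 1)) (i j : Fin (m + 1))
    (x : X.obj n) : X.edge i j (X.act α x) = X.edge (α i) (α j) x := by
  unfold SymSet.edge
  rw [X.act_comp]
  congr 1
  funext t
  by_cases ht : t = 0 <;> simp [ht]

lemma edge_swap (X : SymSet) {n : ℕ} (i j : Fin (n + 1)) (x : X.obj n) :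
    X.edge j i x = X.act (fun t : Fin 2 => if t = 0 then 1 else 0) (X.edge i j x) := by
  unfold SymSet.edge
  rw [X.act_comp]
  congr 1
  funext t
  fin_cases t <;> rfl

lemma edges_of_spineMap_eq (X : SymSet) {n : ℕ} (T : SimpleGraph (Fin (n + 1)))
    {x y : X.obj n} (h : X.spineMap T x = X.spineMap T y) :
    ∀ a b, T.Adj a b → X.edge a b x = X.edge a b y := by
  have ht : X.spineTuple T x = X.spineTuple T y := congrArg Subtype.val h
  have h' : ∀ a b (hlt : a < b), T.Adj a b → X.edge a b x = X.edge a b y :=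
    fun a b hlt ha => congrFun (congrFun (congrFun (congrFun ht a) b) hlt) ha
  intro a b ha
  rcases lt_trichotomy a b with hlt | heq | hgt
  · exact h' a b hlt ha
  · exact absurd heq ha.ne
  · rw [edge_swap X b a x, edge_swap X b a y]
    exact congrArg _ (h' b a hgt ha.symm)

lemma perm_transfer (X : SymSet) {n : ℕ} {T T' : SimpleGraph (Fin (n + 1))}
    (π : Equiv.Perm (Fin (n + 1))) (hmap : ∀ i j, T.Adj i j → T'.Adj (π i) (π j))
    (hinj : Function.Injective (X.spineMap T)) : Function.Injective (X.spineMap T') := by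
  intro x y hxy
  have he := edges_of_spineMap_eq X T' hxy
  have hxy' : X.spineMap T (X.act (π : Fin (n+1) → Fin (n+1)) x)
      = X.spineMap T (X.act (π : Fin (n+1) → Fin (n+1)) y) := by
    apply Subtype.ext
    funext i j hlt ha
    show X.edge i j (X.act _ x) = X.edge i j (X.act _ y)
    rw [edge_act, edge_act]
    exact he _ _ (hmap i j ha)
  have h2 := hinj hxy'
  have hcomp : ∀ z : X.obj n, X.act (π.symm : Fin (n+1) → Fin (n+1))
      (X.act (π : Fin (n+1) → Fin (n+1)) z) = z := by
    intro z
    rw [X.act_comp]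
    have : (π : Fin (n+1) → Fin (n+1)) ∘ (π.symm : Fin (n+1) → Fin (n+1)) = id := by
      funext t; exact Equiv.apply_symm_apply π t
    rw [this, X.act_id]
  calc x = X.act _ (X.act _ x) := (hcomp x).symm
    _ = X.act _ (X.act _ y) := by rw [h2]
    _ = y := hcomp y

lemma p1_inj (X : SymSet)
    (H : ∃ T : SimpleGraph (Fin 3), T.IsTree ∧ Function.Injective (X.spineMap (n := 2) T)) :
    Function.Injective (X.spineMap P1) := by
  obtain ⟨T, hT, hinj⟩ := H
  have hft : Fintype T.edgeSet := Fintype.ofFinite _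
  have hcard : T.edgeFinset.card + 1 = 3 := by
    rw [hT.card_edgeFinset]; simp
  have hnot : ¬(T.Adj 0 1 ∧ T.Adj 0 2 ∧ T.Adj 1 2) := by
    rintro ⟨h01, h02, h12⟩
    have hsub : ({s(0,1), s(0,2), s(1,2)} : Finset (Sym2 (Fin 3))) ⊆ T.edgeFinset := by
      intro e he
      simp only [Finset.mem_insert, Finset.mem_singleton] at he
      rcases he with rfl | rfl | rfl <;> simpa [SimpleGraph.mem_edgeFinset]
    have h3 : ({s(0,1), s(0,2), s(1,2)} : Finset (Sym2 (Fin 3))).card = 3 := by decide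
    have := Finset.card_le_card hsub
    omega
  by_cases h12 : T.Adj 1 2
  · by_cases h02 : T.Adj 0 2
    · have h01 : ¬ T.Adj 0 1 := fun h => hnot ⟨h, h02, h12⟩
      refine perm_transfer X (Equiv.swap 1 2) ?_ hinj
      intro i j hadj
      fin_cases i <;> fin_cases j <;>
        first
          | exact absurd hadj (T.loopless.irrefl _)
          | exact absurd hadj h01
          | exact absurd hadj.symm h01
          | decide
    · refine perm_transfer X (1 : Equiv.Perm (Fin 3)) ?_ hinj
      intro i j hadj
      fin_cases i <;> fin_cases j <;>
        first
          | exact absurd hadj (T.loopless.irrefl _)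
          | exact absurd hadj h02
          | exact absurd hadj.symm h02
          | decide
  · refine perm_transfer X (Equiv.swap 0 1) ?_ hinj
    intro i j hadj
    fin_cases i <;> fin_cases j <;>
      first
        | exact absurd hadj (T.loopless.irrefl _)
        | exact absurd hadj h12
        | exact absurd hadj.symm h12
        | decide

lemma triangle (X : SymSet) (hP1 : Function.Injective (X.spineMap P1)) {n : ℕ}
    {x y : X.obj n} {i c j : Fin (n + 1)}
    (h1 : X.edge i c x = X.edge i c y) (h2 : X.edge c j x = X.edge c j y) :
    X.edge i j x = X.edge i j y := by
  set α : Fin 3 → Fin (n + 1) := fun t => if t = 0 then i else if t = 1 then c else j with hα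
  have key : X.spineMap P1 (X.act α x) = X.spineMap P1 (X.act α y) := by
    apply Subtype.ext
    funext a b hlt hadj
    show X.edge a b (X.act α x) = X.edge a b (X.act α y)
    have hadj' : (a = 0 ∧ b = 1) ∨ (a = 1 ∧ b = 0) ∨ (a = 1 ∧ b = 2) ∨ (a = 2 ∧ b = 1) := hadj
    rcases hadj' with ⟨rfl, rfl⟩ | ⟨rfl, rfl⟩ | ⟨rfl, rfl⟩ | ⟨rfl, rfl⟩
    · rw [edge_act, edge_act]; exact h1
    · exact absurd hlt (by decide)
    · rw [edge_act, edge_act]; exact h2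
    · exact absurd hlt (by decide)
  have hxy := hP1 key
  have e1 : X.edge i j x = X.edge (0 : Fin 3) 2 (X.act α x) := by rw [edge_act]; rfl
  have e2 : X.edge i j y = X.edge (0 : Fin 3) 2 (X.act α y) := by rw [edge_act]; rfl
  rw [e1, e2, hxy]

lemma walk_edges (X : SymSet) {n : ℕ} {T' : SimpleGraph (Fin (n + 1))}
    (hP1 : Function.Injective (X.spineMap P1)) {x y : X.obj n}
    (h : ∀ a b, T'.Adj a b → X.edge a b x = X.edge a b y) :
    ∀ {i j : Fin (n + 1)}, T'.Walk i j → i ≠ j → X.edge i j x = X.edge i j y := by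
  intro i j p
  induction p with
  | nil => intro hne; exact absurd rfl hne
  | @cons u c w ha q ih =>
    intro _
    by_cases hcw : c = w
    · subst hcw; exact h _ _ ha
    · exact triangle X hP1 (h _ _ ha) (ih hcw)


end Aux
/-- `X` is spiny iff for each `n ≥ 1` there exists a spine `T` of `[n]`
such that `𝓔_T : X_n → lim_T X` is injective. -/
theorem stmt0 (X : SymSet) :
    X.Spiny ↔ ∀ n : ℕ, 1 ≤ n → ∃ T : SimpleGraph (Fin (n + 1)), T.IsTree ∧
      Function.Injective (X.spineMap T) := by
  constructor
  · intro hs n hn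
    exact ⟨SimpleGraph.pathGraph (n + 1), pathGraph_isTree n, hs n hn _ (pathGraph_isTree n)⟩
  · intro H n hn T' hT' x y hxy
    obtain ⟨T, hT, hinj⟩ := H n hn
    have hP1 : Function.Injective (X.spineMap P1) := p1_inj X (H 2 (by norm_num))
    have he := edges_of_spineMap_eq X T' hxy
    apply hinj
    apply Subtype.ext
    funext i j hlt ha
    show X.edge i j x = X.edge i j y
    obtain ⟨p⟩ := hT'.isConnected.preconnected i j
    exact walk_edges X hP1 he p (ne_of_lt hlt)
end

section
/- Let X be a partial groupoid and x ∈ X_m. Then x is degenerate if and only if x_{ij} is an identity edge for some i ≠ j in [m]. -/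
open SimpleGraph in
/-- The star graph centered at `i`. -/
def starGraph {n : ℕ} (i : Fin (n + 1)) : SimpleGraph (Fin (n + 1)) where
  Adj u v := u ≠ v ∧ (u = i ∨ v = i)
  symm := ⟨fun u v h => ⟨h.1.symm, h.2.symm⟩⟩
  loopless := ⟨fun u h => h.1 rfl⟩

lemma starGraph_isTree {n : ℕ} (i : Fin (n + 1)) : (starGraph i).IsTree := by
  constructor
  · have hr : ∀ w : Fin (n + 1), (starGraph i).Reachable w i := by
      intro w
      by_cases hw : w = i
      · exact hw ▸ SimpleGraph.Reachable.refl w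
      · exact SimpleGraph.Adj.reachable ⟨hw, Or.inr rfl⟩
    exact ⟨fun u v => (hr u).trans (hr v).symm⟩
  · intro v c hc
    have hlen := hc.three_le_length
    cases c with
    | nil => simp at hlen
    | cons h1 c1 =>
      cases c1 with
      | nil => simp at hlen
      | cons h2 c2 =>
        cases c2 with
        | nil => simp at hlen
        | cons h3 c3 =>
          rename_i a b d
          have hnd := hc.isCircuit.isTrail.edges_nodup
          simp only [SimpleGraph.Walk.edges_cons, List.nodup_cons, List.mem_cons,
            not_or] at hnd
          have ha : a = i := by
            by_contra han
            have hv : v = i := h1.2.resolve_right han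
            have hb : b = i := h2.2.resolve_left han
            exact hnd.1.1 (by rw [hv, hb, Sym2.eq_swap])
          have hb : b = i := by
            by_contra hbn
            have ha' : a = i := h2.2.resolve_right hbn
            have hd : d = i := h3.2.resolve_left hbn
            exact hnd.2.1.1 (by rw [ha', hd, Sym2.eq_swap])
          exact h2.1 (ha.trans hb.symm)

namespace SymSet

/-- The vertex `x·(const i)` of `x`. -/
def vert (X : SymSet) {n : ℕ} (i : Fin (n + 1)) (x : X.obj n) : X.obj 0 :=
  X.act (fun _ : Fin 1 => i) x

lemma edge_act (X : SymSet) {m n : ℕ} (σ : Fin (m + 1) → Fin (n + 1))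
    (i j : Fin (m + 1)) (y : X.obj n) :
    X.edge i j (X.act σ y) = X.edge (σ i) (σ j) y := by
  show X.act _ (X.act _ _) = _
  rw [X.act_comp]
  congr 1
  funext t
  by_cases h : t = 0 <;> simp [Function.comp, h]

lemma edge_self (X : SymSet) {n : ℕ} (i : Fin (n + 1)) (x : X.obj n) :
    X.edge i i x = X.identityEdge (X.vert i x) := by
  show X.act _ _ = X.act _ (X.act _ _)
  rw [X.act_comp]
  congr 1
  funext t
  simp [Function.comp]

lemma edgeDom_edge (X : SymSet) {n : ℕ} (i j : Fin (n + 1)) (x : X.obj n) :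
    X.edgeDom (X.edge i j x) = X.vert i x := by
  show X.act _ (X.act _ _) = _
  rw [X.act_comp]
  congr 1

lemma edgeDom_identityEdge (X : SymSet) (a : X.obj 0) :
    X.edgeDom (X.identityEdge a) = a := by
  show X.act _ (X.act _ _) = _
  rw [X.act_comp]
  have : ((fun _ : Fin 2 => (0 : Fin 1)) ∘ fun _ : Fin 1 => (0 : Fin 2)) = id := by
    funext t
    exact (Fin.eq_zero _).symm ▸ rfl
  rw [this, X.act_id]

lemma edge_swap (X : SymSet) {n : ℕ} (i j : Fin (n + 1)) (x : X.obj n) :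
    X.edge j i x = X.act (fun t : Fin 2 => if t = 0 then 1 else 0) (X.edge i j x) := by
  show X.act _ _ = X.act _ (X.act _ _)
  rw [X.act_comp]
  congr 1
  funext t
  fin_cases t <;> simp [Function.comp]

lemma act_identityEdge (X : SymSet) (sw : Fin 2 → Fin 2) (a : X.obj 0) :
    X.act sw (X.identityEdge a) = X.identityEdge a := by
  show X.act _ (X.act _ _) = _
  rw [X.act_comp]
  congr 1

end SymSet

/-- in a partial groupoid, `x ∈ X_m` is degenerate iff `x_{ij}` is an
identity for some `i ≠ j`. -/
theorem stmt2 (X : SymSet) (hX : X.Spiny) {m : ℕ} (x : X.obj m) :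
    X.Degenerate x ↔ ∃ i j : Fin (m + 1), i ≠ j ∧ X.IsIdentityEdge (X.edge i j x) := by
  constructor
  · rintro ⟨k, σ, y, hsurj, hnbij, rfl⟩
    obtain ⟨i, j, hσ, hne⟩ := Function.not_injective_iff.1
      (fun hinj => hnbij ⟨hinj, hsurj⟩)
    refine ⟨i, j, hne, X.vert (σ i) y, ?_⟩
    rw [X.edge_act, ← hσ, X.edge_self]
  · rintro ⟨i, j, hij, a, hid⟩
    obtain ⟨k, rfl⟩ : ∃ k, m = k + 1 := by
      cases m with
      | zero =>
        have h1 := i.isLt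
        have h2 := j.isLt
        exact absurd (Fin.ext (by omega)) hij
      | succ k => exact ⟨k, rfl⟩
    have hii : X.edge i i x = X.edge i j x := by
      rw [X.edge_self, hid]
      congr 1
      rw [← X.edgeDom_identityEdge a, ← hid, X.edgeDom_edge]
    have hji : X.edge j i x = X.edge i i x := by
      rw [X.edge_swap, hid, X.act_identityEdge, hii, hid]
    set r : Fin (k + 2) → Fin (k + 2) := fun t => if t = j then i else t with hr
    have hxr : x = X.act r x := by
      apply hX (k + 1) (Nat.succ_le_succ (Nat.zero_le k)) (starGraph i) (starGraph_isTree i)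
      apply Subtype.ext
      funext u v hlt hadj
      show X.edge u v x = X.edge u v (X.act r x)
      rw [X.edge_act]
      obtain ⟨huv, hcase⟩ := hadj
      by_cases hu : u = j
      · have hv : v = i := hcase.resolve_left (fun h => hij (h.symm.trans hu))
        have h1 : r u = i := by simp [hr, hu]
        have h2 : r v = i := by rw [hv]; simp [hr]
        rw [h1, h2, hu, hv]
        exact hji
      · by_cases hv : v = j
        · have hu' : u = i := hcase.resolve_right (fun h => hij (h.symm.trans hv))
          have h1 : r u = i := by rw [hu']; simp [hr]
          have h2 : r v = i := by simp [hr, hv]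
          rw [h1, h2, hu', hv]
          exact hii.symm
        · have h1 : r u = u := by simp [hr, hu]
          have h2 : r v = v := by simp [hr, hv]
          rw [h1, h2]
    have hex : ∀ t : Fin (k + 2), t ≠ j → ∃ s : Fin (k + 1), j.succAbove s = t :=
      fun t ht => Fin.exists_succAbove_eq ht
    choose g hg using hex
    set σ : Fin (k + 2) → Fin (k + 1) := fun t => if h : t = j then g i hij else g t h
      with hσd
    have hcomp : (fun s => j.succAbove s) ∘ σ = r := by
      funext t
      by_cases ht : t = j
      · subst ht
        simp [hσd, hr, hg i hij]
      · simp [hσd, hr, ht, hg t ht]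
    have hσsurj : Function.Surjective σ := by
      intro s
      refine ⟨j.succAbove s, ?_⟩
      have hts : j.succAbove s ≠ j := Fin.succAbove_ne j s
      have hss : j.succAbove (σ (j.succAbove s)) = j.succAbove s := by
        simp [hσd, hts, hg _ hts]
      exact Fin.succAbove_right_injective hss
    have hσij : σ i = σ j := by
      simp [hσd, hij]
    refine ⟨k, σ, X.act (fun s => j.succAbove s) x, hσsurj, ?_, ?_⟩
    · intro hbij
      exact hij (hbij.1 hσij)
    · rw [X.act_comp, hcomp, ← hxr]
end

section
/- Let X be a partial groupoid, f ∈ X_1, and x ∈ X_2 a 2-simplex with x_{01} = f·τ (the inverse of f) and x_{12} = f. Then x = f·χ, where χ : [2] → [1] is the surjection sending i to |1 − i|; in particular x is degenerate. -/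
open SimpleGraph in
private instance pathGraph3AdjDec : DecidableRel (pathGraph 3).Adj :=
  fun _ _ => decidable_of_iff _ pathGraph_adj.symm

open SimpleGraph in
private lemma pathGraph3_isTree : (pathGraph 3).IsTree := by
  constructor
  · exact pathGraph_connected 2
  · intro v c hc
    have h3 := hc.three_le_length
    have hnodup : c.edges.Nodup := hc.edges_nodup
    have hsub : c.edges.toFinset ⊆ (pathGraph 3).edgeFinset := by
      intro e he
      rw [List.mem_toFinset] at he
      exact SimpleGraph.mem_edgeFinset.2 (SimpleGraph.Walk.edges_subset_edgeSet c he)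
    have hcard : c.edges.toFinset.card ≤ (pathGraph 3).edgeFinset.card :=
      Finset.card_le_card hsub
    rw [List.toFinset_card_of_nodup hnodup, SimpleGraph.Walk.length_edges] at hcard
    have : (pathGraph 3).edgeFinset.card = 2 := by decide
    omega

/-- if `x ∈ X_2` has `x_{01} = f⁻¹ = f·τ` and `x_{12} = f`, then
`x = f·χ` where `χ : [2] → [1]` sends `i` to `|1 - i|`; in particular `x` is degenerate. -/
theorem stmt3 (X : SymSet) (hX : X.Spiny) (f : X.obj 1) (x : X.obj 2)
    (h01 : X.edge 0 1 x = X.act (fun t : Fin 2 => if t = 0 then 1 else 0) f)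
    (h12 : X.edge 1 2 x = f) :
    x = X.act (fun i : Fin 3 => if i = 1 then 0 else 1) f ∧ X.Degenerate x := by
  set χ : Fin 3 → Fin 2 := fun i => if i = 1 then 0 else 1 with hχ
  have hmain : x = X.act χ f := by
    apply hX 2 (by norm_num) (SimpleGraph.pathGraph 3) pathGraph3_isTree
    apply Subtype.ext
    funext i j hlt h
    show X.edge i j x = X.edge i j (X.act χ f)
    rw [SimpleGraph.pathGraph_adj] at h
    unfold SymSet.edge
    rw [X.act_comp]
    fin_cases i <;> fin_cases j <;> simp_all <;> first
      | omega
      | (rw [show (χ ∘ fun t : Fin 2 => if t = 0 then (0 : Fin 3) else 1)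
            = (fun t : Fin 2 => if t = 0 then 1 else 0) from by decide]
         exact h01)
      | (rw [show (χ ∘ fun t : Fin 2 => if t = 0 then (1 : Fin 3) else 2)
            = id from by decide, X.act_id]
         exact h12)
  refine ⟨hmain, 1, χ, f, ?_, ?_, hmain⟩
  · decide
  · intro hb
    exact absurd (hb.1 (a₁ := 0) (a₂ := 2) (by decide)) (by decide)
end

section
/- Let X and Y be symmetric simplicial sets such that X has dimension n and Y has dimension m. Then the product symmetric set X × Y (formed levelwise) has dimension nm + n + m. -/
namespace SymSet

/-- Pairing for the product symmetric set. -/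
def mk2 (X Y : SymSet) (d : ℕ) (a : X.obj d) (b : Y.obj d) : (X.prod Y).obj d := (a, b)

/-- First projection for the product symmetric set. -/
def pfst (X Y : SymSet) {d : ℕ} (p : (X.prod Y).obj d) : X.obj d :=
  (p : X.obj d × Y.obj d).1

/-- Second projection for the product symmetric set. -/
def psnd (X Y : SymSet) {d : ℕ} (p : (X.prod Y).obj d) : Y.obj d :=
  (p : X.obj d × Y.obj d).2

lemma mk2_eta (X Y : SymSet) {d : ℕ} (p : (X.prod Y).obj d) :
    p = mk2 X Y d (pfst X Y p) (psnd X Y p) := rfl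

lemma pfst_act (X Y : SymSet) {c d : ℕ} (α : Fin (c + 1) → Fin (d + 1))
    (p : (X.prod Y).obj d) : pfst X Y ((X.prod Y).act α p) = X.act α (pfst X Y p) := rfl

lemma psnd_act (X Y : SymSet) {c d : ℕ} (α : Fin (c + 1) → Fin (d + 1))
    (p : (X.prod Y).obj d) : psnd X Y ((X.prod Y).act α p) = Y.act α (psnd X Y p) := rfl

lemma act_mk2 (X Y : SymSet) {c d : ℕ} (α : Fin (c + 1) → Fin (d + 1))
    (a : X.obj d) (b : Y.obj d) :
    (X.prod Y).act α (mk2 X Y d a b) = mk2 X Y c (X.act α a) (Y.act α b) := rfl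

/-- `x ∈ X_d` is *basic* if it does not factor through any lower level. -/
def Basic (X : SymSet) {d : ℕ} (x : X.obj d) : Prop :=
  ∀ (k : ℕ), k < d → ∀ (α : Fin (d + 1) → Fin (k + 1)) (q : X.obj k), x ≠ X.act α q

lemma aux_lower (X : SymSet) (W : X.SymSubset) (d : ℕ)
    (hW : ∀ x : X.obj d, x ∈ W.carrier d) {k : ℕ} (hk : k ≤ d) (z : X.obj k) :
    z ∈ W.carrier k := by
  have hι : (k + 1) ≤ (d + 1) := by omega
  have hz : z = X.act (Fin.castLE hι)
      (X.act (fun j => (⟨min j.val k, by omega⟩ : Fin (k+1))) z) := by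
    rw [X.act_comp]
    have h : ((fun j : Fin (d+1) => (⟨min j.val k, by omega⟩ : Fin (k+1))) ∘ Fin.castLE hι)
        = id := by
      funext i
      simp only [Function.comp_apply, Fin.castLE, id_eq]
      ext
      simp only
      omega
    rw [h, X.act_id]
  rw [hz]
  exact W.act_mem _ (hW _)

lemma aux_factor (X : SymSet) {n : ℕ} (h : X.IsSkeletal n) (N : ℕ) (x : X.obj N) :
    ∃ (σ : Fin (N + 1) → Fin (n + 1)) (x' : X.obj n), x = X.act σ x' := by
  refine h ⟨fun N => {x | ∃ (σ : Fin (N + 1) → Fin (n + 1)) (x' : X.obj n), x = X.act σ x'},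
    ?_⟩ (fun x => ⟨id, x, (X.act_id x).symm⟩) N x
  rintro m' n' α x ⟨σ, x', rfl⟩
  exact ⟨σ ∘ α, x', X.act_comp α σ x'⟩

lemma aux_basic_exists (X : SymSet) (n : ℕ) (hX : X.HasDim n) (h0 : Nonempty (X.obj 0)) :
    ∃ x : X.obj n, X.Basic x := by
  rcases Nat.eq_zero_or_pos n with rfl | hn
  · obtain ⟨a⟩ := h0
    exact ⟨a, fun k hk => absurd hk (by omega)⟩
  by_contra hc
  push_neg at hc
  simp only [Basic, not_forall, not_ne_iff] at hc
  have hsk : X.IsSkeletal (n - 1) := by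
    intro W hW
    apply hX.1 W
    intro x
    obtain ⟨k, hk, α, q, hx⟩ := hc x
    have hq : q ∈ W.carrier k := X.aux_lower W (n - 1) hW (by omega) q
    rw [hx]
    exact W.act_mem α hq
  exact hX.2 (n - 1) (by omega) hsk

lemma aux_not_skeletal (X : SymSet) {d k : ℕ} (hk : k < d) (w : X.obj d) (hw : X.Basic w) :
    ¬ X.IsSkeletal k := by
  intro h
  let Z : X.SymSubset := ⟨fun N => {p | ∃ j, j ≤ k ∧ ∃ (α : Fin (N + 1) → Fin (j + 1)) (q : X.obj j),
      p = X.act α q}, by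
        rintro m' n' α x ⟨j, hj, σ, q, rfl⟩
        exact ⟨j, hj, σ ∘ α, q, X.act_comp α σ q⟩⟩
  have hZk : ∀ x : X.obj k, x ∈ Z.carrier k := fun x => ⟨k, le_refl k, id, x, (X.act_id x).symm⟩
  have hmem : w ∈ Z.carrier d := h Z hZk d w
  obtain ⟨j, hj, α, q, hwq⟩ := hmem
  exact hw j (by omega) α q hwq

lemma aux_prod_basic (X Y : SymSet) {n m : ℕ}
    (x : X.obj n) (hx : X.Basic x) (y : Y.obj m) (hy : Y.Basic y)
    (E : Fin (n * m + n + m + 1) ≃ Fin (n + 1) × Fin (m + 1))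
    (w : (X.prod Y).obj (n * m + n + m))
    (hw1 : pfst X Y w = X.act (fun a => (E a).1) x)
    (hw2 : psnd X Y w = Y.act (fun a => (E a).2) y) :
    (X.prod Y).Basic w := by
  intro k hk α q hq
  -- α is not injective
  have hninj : ¬ Function.Injective α := by
    intro hinj
    have := Fintype.card_le_of_injective α hinj
    simp only [Fintype.card_fin] at this
    omega
  rw [Function.not_injective_iff] at hninj
  obtain ⟨a, b, hab, hne⟩ := hninj
  set β : Fin (n * m + n + m + 1) → Fin (n * m + n + m + 1) :=
    fun t => if t = b then a else t with hβ
  have hαβ : α ∘ β = α := by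
    funext t
    simp only [Function.comp_apply, hβ]
    split
    · rename_i h; rw [h, hab]
    · rfl
  have hwβ : (X.prod Y).act β w = w := by
    rw [hq, (X.prod Y).act_comp, hαβ]
  have h1 : X.act ((fun a => (E a).1) ∘ β) x = X.act (fun a => (E a).1) x := by
    have h := congrArg (pfst X Y) hwβ
    rw [pfst_act, hw1, X.act_comp] at h
    exact h
  have h2 : Y.act ((fun a => (E a).2) ∘ β) y = Y.act (fun a => (E a).2) y := by
    have h := congrArg (psnd X Y) hwβ
    rw [psnd_act, hw2, Y.act_comp] at h
    exact h
  have hEab : E a ≠ E b := fun h => hne (E.injective h)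
  have hsymmb : E.symm ((E b).1, (E b).2) = b := by simp
  have hcases : (E a).1 ≠ (E b).1 ∨ (E a).2 ≠ (E b).2 := by
    by_contra hcon
    push_neg at hcon
    exact hEab (Prod.ext hcon.1 hcon.2)
  rcases hcases with hne1 | hne2
  · -- first coordinates differ: contradict Basic x
    have hn1 : n ≠ 0 := by
      rintro rfl
      exact hne1 (Fin.ext (by omega))
    obtain ⟨n', rfl⟩ := Nat.exists_eq_succ_of_ne_zero hn1
    set ι : Fin (n' + 1 + 1) → Fin ((n' + 1) * m + (n' + 1) + m + 1) :=
      fun i => E.symm (i, (E b).2) with hι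
    have hg₁ι : (fun a => (E a).1) ∘ ι = id := by
      funext i
      simp [hι]
    have hxval : x = X.act (((fun a => (E a).1) ∘ β) ∘ ι) x := by
      rw [← X.act_comp, h1, X.act_comp, hg₁ι, X.act_id]
    set γ : Fin (n' + 1 + 1) → Fin (n' + 1 + 1) := ((fun a => (E a).1) ∘ β) ∘ ι with hγ
    have hγval : ∀ i, γ i = if i = (E b).1 then (E a).1 else i := by
      intro i
      simp only [hγ, hι, hβ, Function.comp_apply]
      by_cases hib : E.symm (i, (E b).2) = b
      · have hi : i = (E b).1 := by
          have := congrArg (fun t => (E t).1) hib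
          simpa using this
        rw [if_pos hib, if_pos hi]
      · have hi : i ≠ (E b).1 := by
          intro h
          apply hib
          rw [h]
          exact hsymmb
        rw [if_neg hib, if_neg hi]
        simp
    have hγne : ∀ i, γ i ≠ (E b).1 := by
      intro i
      rw [hγval i]
      split
      · exact hne1
      · assumption
    choose δ hδ using fun i => Fin.exists_succAbove_eq (hγne i)
    have hfac : (E b).1.succAbove ∘ δ = γ := funext hδ
    have hkey : x = X.act δ (X.act ((E b).1.succAbove) x) := by
      rw [X.act_comp, hfac]
      exact hxval
    exact hx n' (by omega) δ _ hkey
  · -- second coordinates differ: contradict Basic y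
    have hm1 : m ≠ 0 := by
      rintro rfl
      exact hne2 (Fin.ext (by omega))
    obtain ⟨m', rfl⟩ := Nat.exists_eq_succ_of_ne_zero hm1
    set ι : Fin (m' + 1 + 1) → Fin (n * (m' + 1) + n + (m' + 1) + 1) :=
      fun i => E.symm ((E b).1, i) with hι
    have hg₂ι : (fun a => (E a).2) ∘ ι = id := by
      funext i
      simp [hι]
    have hyval : y = Y.act (((fun a => (E a).2) ∘ β) ∘ ι) y := by
      rw [← Y.act_comp, h2, Y.act_comp, hg₂ι, Y.act_id]
    set γ : Fin (m' + 1 + 1) → Fin (m' + 1 + 1) := ((fun a => (E a).2) ∘ β) ∘ ι with hγ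
    have hγval : ∀ i, γ i = if i = (E b).2 then (E a).2 else i := by
      intro i
      simp only [hγ, hι, hβ, Function.comp_apply]
      by_cases hib : E.symm ((E b).1, i) = b
      · have hi : i = (E b).2 := by
          have := congrArg (fun t => (E t).2) hib
          simpa using this
        rw [if_pos hib, if_pos hi]
      · have hi : i ≠ (E b).2 := by
          intro h
          apply hib
          rw [h]
          exact hsymmb
        rw [if_neg hib, if_neg hi]
        simp
    have hγne : ∀ i, γ i ≠ (E b).2 := by
      intro i
      rw [hγval i]
      split
      · exact hne2
      · assumption
    choose δ hδ using fun i => Fin.exists_succAbove_eq (hγne i)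
    have hfac : (E b).2.succAbove ∘ δ = γ := funext hδ
    have hkey : y = Y.act δ (Y.act ((E b).2.succAbove) y) := by
      rw [Y.act_comp, hfac]
      exact hyval
    exact hy m' (by omega) δ _ hkey

end SymSet

/-- if (nonempty) `X` has dimension `n` and (nonempty) `Y` has dimension
`m`, then `X × Y` has dimension `nm + n + m`. -/
theorem stmt6 (X Y : SymSet) (n m : ℕ) (hX0 : Nonempty (X.obj 0)) (hY0 : Nonempty (Y.obj 0))
    (hX : X.HasDim n) (hY : Y.HasDim m) :
    (X.prod Y).HasDim (n * m + n + m) := by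
  have hcard : n * m + n + m + 1 = (n + 1) * (m + 1) := by ring
  let E : Fin (n * m + n + m + 1) ≃ Fin (n + 1) × Fin (m + 1) :=
    (finCongr hcard).trans finProdFinEquiv.symm
  constructor
  · -- skeletal at n*m+n+m
    intro W hW N p
    obtain ⟨σ, x', hx'⟩ := X.aux_factor hX.1 N (SymSet.pfst X Y p)
    obtain ⟨τ, y', hy'⟩ := Y.aux_factor hY.1 N (SymSet.psnd X Y p)
    set g : Fin (N + 1) → Fin (n * m + n + m + 1) := fun t => E.symm (σ t, τ t) with hg
    have h1 : X.act g (X.act (fun a => (E a).1) x') = SymSet.pfst X Y p := by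
      rw [X.act_comp, hx']
      congr 1
      funext t
      simp [hg]
    have h2 : Y.act g (Y.act (fun a => (E a).2) y') = SymSet.psnd X Y p := by
      rw [Y.act_comp, hy']
      congr 1
      funext t
      simp [hg]
    have hp : p = (X.prod Y).act g
        (SymSet.mk2 X Y (n * m + n + m) (X.act (fun a => (E a).1) x')
          (Y.act (fun a => (E a).2) y')) := by
      rw [SymSet.act_mk2, h1, h2]
      exact SymSet.mk2_eta X Y p
    rw [hp]
    exact W.act_mem g (hW _)
  · -- not skeletal below
    intro k hk
    obtain ⟨x, hx⟩ := X.aux_basic_exists n hX hX0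
    obtain ⟨y, hy⟩ := Y.aux_basic_exists m hY hY0
    exact (X.prod Y).aux_not_skeletal hk _
      (X.aux_prod_basic Y x hx y hy E
        (SymSet.mk2 X Y _ (X.act (fun a => (E a).1) x) (Y.act (fun a => (E a).2) y)) rfl rfl)
end
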